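/- In the setting of the dgl (L₁, D) built from minimal Quillen models of 2-cones, for all A, B ∈ 𝕃(V) the derivations [[D, σ_A], σ_B] and (−1)^{|A|+1} σ_{[A,B]} agree on 𝕃(W₀). -/
import Mathlib

universe u

/-- A graded Lie algebra over `ℚ`: a `ℤ`-graded vector space with a bilinear bracket
satisfying graded antisymmetry and the graded Jacobi identity on homogeneous elements. -/
structure GLA (Lc : Type u) [AddCommGroup Lc] [Module ℚ Lc] where
  grade : ℤ → Submodule ℚ Lc
  internal : DirectSum.IsInternal grade
  br : Lc →ₗ[ℚ] Lc →ₗ[ℚ] Lc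
  br_mem : ∀ {i j : ℤ} {x y : Lc}, x ∈ grade i → y ∈ grade j → br x y ∈ grade (i + j)
  antisymm : ∀ {i j : ℤ} {x y : Lc}, x ∈ grade i → y ∈ grade j →
      br x y = -((-1 : ℚ) ^ (i * j) • br y x)
  jacobi : ∀ {i j : ℤ} {x y : Lc} (z : Lc), x ∈ grade i → y ∈ grade j →
      br x (br y z) = br (br x y) z + (-1 : ℚ) ^ (i * j) • br y (br x z)

namespace GLA

variable {Lc : Type u} [AddCommGroup Lc] [Module ℚ Lc]

/-- The Lie subalgebra (as a submodule closed under the bracket) generated by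
a graded family of subspaces. -/
def lieSub (G : GLA Lc) (p : ℤ → Submodule ℚ Lc) : Submodule ℚ Lc :=
  sInf {q | (∀ i, p i ≤ q) ∧ ∀ x ∈ q, ∀ y ∈ q, G.br x y ∈ q}

/-- The submodule of decomposable elements of `L`: the span of all brackets. -/
def dec (G : GLA Lc) : Submodule ℚ Lc :=
  Submodule.span ℚ {x : Lc | ∃ a b : Lc, x = G.br a b}

/-- A graded Lie algebra is reduced if it vanishes in degrees `≤ 0`. -/
def Reduced (G : GLA Lc) : Prop := ∀ i : ℤ, i ≤ 0 → G.grade i = ⊥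

end GLA

/-! ### Auxiliary sign lemmas -/

lemma nzp_add (p q : ℤ) : (-1:ℚ)^(p+q) = (-1:ℚ)^p * (-1:ℚ)^q :=
  zpow_add₀ (by norm_num) p q

lemma nzp_two (k : ℤ) : (-1:ℚ)^(2*k) = 1 := by rw [zpow_mul]; norm_num

lemma nzp_congr {p q : ℤ} (k : ℤ) (h : p = q + 2*k) : (-1:ℚ)^p = (-1:ℚ)^q := by
  rw [h, nzp_add, nzp_two, mul_one]

lemma nzp_sq (p : ℤ) : (-1:ℚ)^p * (-1:ℚ)^p = 1 := by
  rw [← nzp_add, nzp_congr p (by ring) (q := 0)]; norm_num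

/-! ### Auxiliary lemmas on Lie subalgebras -/

namespace GLA

variable {Lc : Type u} [AddCommGroup Lc] [Module ℚ Lc]
variable {G : GLA Lc} {p p' : ℤ → Submodule ℚ Lc}

lemma lieSub_le {q : Submodule ℚ Lc} (h1 : ∀ i, p i ≤ q)
    (h2 : ∀ x ∈ q, ∀ y ∈ q, G.br x y ∈ q) : G.lieSub p ≤ q :=
  sInf_le ⟨h1, h2⟩

lemma le_lieSub (i : ℤ) : p i ≤ G.lieSub p := by
  intro x hx
  refine Submodule.mem_sInf.2 ?_
  rintro q ⟨h1, -⟩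
  exact h1 i hx

lemma lieSub_br {x y : Lc} (hx : x ∈ G.lieSub p) (hy : y ∈ G.lieSub p) :
    G.br x y ∈ G.lieSub p := by
  refine Submodule.mem_sInf.2 ?_
  rintro q hq
  exact hq.2 x (Submodule.mem_sInf.1 hx q hq) y (Submodule.mem_sInf.1 hy q hq)

lemma lieSub_mono (h : ∀ i, p i ≤ p' i) : G.lieSub p ≤ G.lieSub p' :=
  lieSub_le (fun i => (h i).trans (le_lieSub i)) (fun _ hx _ hy => lieSub_br hx hy)

/-- Induction over homogeneous elements of a Lie subalgebra generated by graded pieces. -/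
lemma lieSub_homog_le (hp : ∀ i, p i ≤ G.grade i) (K : Submodule ℚ Lc)
    (base : ∀ i, ∀ v ∈ p i, v ∈ K)
    (step : ∀ (n m : ℤ) (x y : Lc), x ∈ G.grade n → y ∈ G.grade m →
      x ∈ G.lieSub p → y ∈ G.lieSub p → x ∈ K → y ∈ K → G.br x y ∈ K) :
    G.lieSub p ≤ K := by
  set H : Set Lc := {X | ∃ n : ℤ, X ∈ G.grade n ∧ X ∈ G.lieSub p ∧ X ∈ K} with hH
  have hq : G.lieSub p ≤ Submodule.span ℚ H := by
    refine lieSub_le (fun i x hx => Submodule.subset_span ?_) ?_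
    · exact ⟨i, hp i hx, le_lieSub i hx, base i x hx⟩
    · intro x hx y hy
      induction hx using Submodule.span_induction generalizing y with
      | mem x hxH =>
        induction hy using Submodule.span_induction with
        | mem y hyH =>
          obtain ⟨n, hn, hl, hk⟩ := hxH
          obtain ⟨m, hm, hl', hk'⟩ := hyH
          exact Submodule.subset_span
            ⟨n + m, G.br_mem hn hm, lieSub_br hl hl', step n m x y hn hm hl hl' hk hk'⟩
        | zero => simp
        | add a b _ _ ha hb => rw [map_add]; exact Submodule.add_mem _ ha hb
        | smul c a _ ha => rw [map_smul]; exact Submodule.smul_mem _ _ ha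
      | zero => simp
      | add a b _ _ ha hb =>
          rw [map_add, LinearMap.add_apply]; exact Submodule.add_mem _ (ha y hy) (hb y hy)
      | smul c a _ ha =>
          rw [map_smul, LinearMap.smul_apply]; exact Submodule.smul_mem _ _ (ha y hy)
  refine hq.trans (Submodule.span_le.2 ?_)
  rintro x ⟨n, -, -, hk⟩
  exact hk

/-- The graded commutator of two graded derivations is a graded derivation. -/
lemma der_comm (G : GLA Lc) (f g : Lc →ₗ[ℚ] Lc) (s t u : ℤ) (hu : u = s + t)
    (hf1 : ∀ {n : ℤ} {x : Lc}, x ∈ G.grade n → f x ∈ G.grade (n + s))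
    (hg1 : ∀ {n : ℤ} {x : Lc}, x ∈ G.grade n → g x ∈ G.grade (n + t))
    (hf2 : ∀ {n : ℤ} (x y : Lc), x ∈ G.grade n →
      f (G.br x y) = G.br (f x) y + (-1:ℚ)^(s*n) • G.br x (f y))
    (hg2 : ∀ {n : ℤ} (x y : Lc), x ∈ G.grade n →
      g (G.br x y) = G.br (g x) y + (-1:ℚ)^(t*n) • G.br x (g y)) :
    (∀ {n : ℤ} {x : Lc}, x ∈ G.grade n →
      (f ∘ₗ g - ((-1:ℚ)^(s*t)) • (g ∘ₗ f)) x ∈ G.grade (n + u)) ∧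
    (∀ {n : ℤ} (x y : Lc), x ∈ G.grade n →
      (f ∘ₗ g - ((-1:ℚ)^(s*t)) • (g ∘ₗ f)) (G.br x y)
        = G.br ((f ∘ₗ g - ((-1:ℚ)^(s*t)) • (g ∘ₗ f)) x) y
          + (-1:ℚ)^(u*n) • G.br x ((f ∘ₗ g - ((-1:ℚ)^(s*t)) • (g ∘ₗ f)) y)) := by
  constructor
  · intro n x hx
    simp only [LinearMap.sub_apply, LinearMap.smul_apply, LinearMap.comp_apply]
    have h1 : f (g x) ∈ G.grade (n + u) := by
      have := hf1 (hg1 hx)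
      rwa [show n + t + s = n + u by rw [hu]; ring] at this
    have h2 : g (f x) ∈ G.grade (n + u) := by
      have := hg1 (hf1 hx)
      rwa [show n + s + t = n + u by rw [hu]; ring] at this
    exact Submodule.sub_mem _ h1 (Submodule.smul_mem _ _ h2)
  · intro n x y hx
    simp only [LinearMap.sub_apply, LinearMap.smul_apply, LinearMap.comp_apply]
    rw [hg2 x y hx, hf2 x y hx, map_add, map_add, map_smul, map_smul,
      hf2 (g x) y (hg1 hx), hf2 x (g y) hx, hg2 (f x) y (hf1 hx), hg2 x (f y) hx,
      show (-1:ℚ)^(s*(n+t)) = (-1:ℚ)^(s*t) * (-1:ℚ)^(s*n) by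
        rw [← nzp_add]; exact nzp_congr 0 (by ring),
      show (-1:ℚ)^(t*(n+s)) = (-1:ℚ)^(s*t) * (-1:ℚ)^(t*n) by
        rw [← nzp_add]; exact nzp_congr 0 (by ring),
      show (-1:ℚ)^(u*n) = (-1:ℚ)^(s*n) * (-1:ℚ)^(t*n) by
        rw [hu, ← nzp_add]; exact nzp_congr 0 (by ring)]
    simp only [map_sub, map_smul, map_add, LinearMap.sub_apply, LinearMap.smul_apply,
      LinearMap.add_apply, smul_sub, smul_add, smul_smul]
    have hsq := nzp_sq (s*t)
    match_scalars <;>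
      first
        | ring1
        | linear_combination hsq
        | linear_combination -hsq
        | linear_combination ((-1:ℚ)^(s*n)) * hsq
        | linear_combination (-((-1:ℚ)^(s*n))) * hsq
        | linear_combination ((-1:ℚ)^(t*n)) * hsq
        | linear_combination (-((-1:ℚ)^(t*n))) * hsq

end GLA
theorem statement8
    {Lc : Type u} [AddCommGroup Lc] [Module ℚ Lc] (G : GLA Lc)
    (V0 V1 W0 W1 Sp : ℤ → Submodule ℚ Lc)
    -- the ambient free Lie algebra is reduced
    (hred : G.Reduced)
    (hV0 : ∀ i, V0 i ≤ G.grade i) (hV1 : ∀ i, V1 i ≤ G.grade i)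
    (hW0 : ∀ i, W0 i ≤ G.grade i) (hW1 : ∀ i, W1 i ≤ G.grade i)
    (hSp : ∀ i, Sp i ≤ G.grade i)
    -- the suspension `s(v ⊗ w)`, bilinear, of degree `|v|+|w|+1`; in `L₁` only
    -- `s(V₀⊗W₀) ⊕ s(V₁⊗W₀) ⊕ s(V₀⊗W₁)` is present
    (sus : Lc →ₗ[ℚ] Lc →ₗ[ℚ] Lc)
    (hsus00 : ∀ {i j : ℤ} {v w : Lc}, v ∈ V0 i → w ∈ W0 j → sus v w ∈ Sp (i + j + 1))
    (hsus10 : ∀ {i j : ℤ} {v w : Lc}, v ∈ V1 i → w ∈ W0 j → sus v w ∈ Sp (i + j + 1))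
    (hsus01 : ∀ {i j : ℤ} {v w : Lc}, v ∈ V0 i → w ∈ W1 j → sus v w ∈ Sp (i + j + 1))
    -- `L₁` is generated by `V ⊕ W ⊕ s(V₀⊗W₀) ⊕ s(V₁⊗W₀) ⊕ s(V₀⊗W₁)`
    (hgen : G.lieSub (fun i => V0 i ⊔ V1 i ⊔ W0 i ⊔ W1 i ⊔ Sp i) = ⊤)
    -- the derivations `σ_A` for homogeneous `A ∈ 𝕃(V ⊕ W)`
    (sg : ℤ → Lc → (Lc →ₗ[ℚ] Lc))
    (hsg_grade : ∀ {a : ℤ} {A : Lc}, A ∈ G.lieSub (fun i => V0 i ⊔ V1 i ⊔ W0 i ⊔ W1 i) →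
      A ∈ G.grade a → ∀ {n : ℤ} {x : Lc}, x ∈ G.grade n → sg a A x ∈ G.grade (n + a + 1))
    (hsg_der : ∀ {a : ℤ} {A : Lc}, A ∈ G.lieSub (fun i => V0 i ⊔ V1 i ⊔ W0 i ⊔ W1 i) →
      A ∈ G.grade a → ∀ {n : ℤ} (x y : Lc), x ∈ G.grade n →
      sg a A (G.br x y) = G.br (sg a A x) y + (-1 : ℚ) ^ ((a + 1) * n) • G.br x (sg a A y))
    (hsg_vw : ∀ {i j : ℤ} {v w : Lc}, v ∈ V0 i ⊔ V1 i → w ∈ W0 j → sg i v w = sus v w)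
    (hsg_vw' : ∀ {i j : ℤ} {v w : Lc}, v ∈ V0 i → w ∈ W1 j → sg i v w = sus v w)
    (hsg_wv : ∀ {i j : ℤ} {v w : Lc}, v ∈ V0 i ⊔ V1 i → w ∈ W0 j →
      sg j w v = (-1 : ℚ) ^ (i * j) • sus v w)
    (hsg_wv' : ∀ {i j : ℤ} {v w : Lc}, v ∈ V0 i → w ∈ W1 j →
      sg j w v = (-1 : ℚ) ^ (i * j) • sus v w)
    (hsg_vv : ∀ {i i' : ℤ} {v v' : Lc}, v ∈ V0 i ⊔ V1 i → v' ∈ V0 i' ⊔ V1 i' →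
      sg i v v' = 0)
    (hsg_ww : ∀ {j j' : ℤ} {w w' : Lc}, w ∈ W0 j ⊔ W1 j → w' ∈ W0 j' ⊔ W1 j' →
      sg j w w' = 0)
    (hsg_vS : ∀ {i k : ℤ} {v x : Lc}, v ∈ V0 i ⊔ V1 i → x ∈ Sp k → sg i v x = 0)
    (hsg_wS : ∀ {j k : ℤ} {w x : Lc}, w ∈ W0 j ⊔ W1 j → x ∈ Sp k → sg j w x = 0)
    (hsg_Av : ∀ {a : ℤ} {A : Lc}, A ∈ G.lieSub (fun i => V0 i ⊔ V1 i ⊔ W0 i ⊔ W1 i) →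
      A ∈ G.grade a → ∀ {i : ℤ} {v : Lc}, v ∈ V0 i ⊔ V1 i →
      sg a A v = (-1 : ℚ) ^ (i * a) • sg i v A)
    (hsg_Aw : ∀ {a : ℤ} {A : Lc}, A ∈ G.lieSub (fun i => V0 i ⊔ V1 i ⊔ W0 i ⊔ W1 i) →
      A ∈ G.grade a → ∀ {j : ℤ} {w : Lc}, w ∈ W0 j ⊔ W1 j →
      sg a A w = (-1 : ℚ) ^ (j * a) • sg j w A)
    (hsg_AS : ∀ {a : ℤ} {A : Lc}, A ∈ G.lieSub (fun i => V0 i ⊔ V1 i ⊔ W0 i ⊔ W1 i) →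
      A ∈ G.grade a → ∀ {k : ℤ} {x : Lc}, x ∈ Sp k → sg a A x = 0)
    -- the degree `-1` derivation `D` of `L₁`
    (D : Lc →ₗ[ℚ] Lc)
    (hD_grade : ∀ {i : ℤ} {x : Lc}, x ∈ G.grade i → D x ∈ G.grade (i - 1))
    (hD_der : ∀ {i : ℤ} (x y : Lc), x ∈ G.grade i →
      D (G.br x y) = G.br (D x) y + (-1 : ℚ) ^ ((-1 : ℤ) * i) • G.br x (D y))
    -- `D = ∂_V` on `V`, `D = ∂_W` on `W`, with `∂(V₀) = ∂(W₀) = 0`,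
    -- `∂(V₁) ⊆ 𝕃(V₀)` and `∂(W₁) ⊆ 𝕃(W₀)`
    (hD_V0 : ∀ {i : ℤ} {v : Lc}, v ∈ V0 i → D v = 0)
    (hD_W0 : ∀ {j : ℤ} {w : Lc}, w ∈ W0 j → D w = 0)
    (hD_V1 : ∀ {i : ℤ} {v : Lc}, v ∈ V1 i → D v ∈ G.lieSub V0)
    (hD_W1 : ∀ {j : ℤ} {w : Lc}, w ∈ W1 j → D w ∈ G.lieSub W0)
    -- minimality of the two Quillen models
    (hD_V1dec : ∀ {i : ℤ} {v : Lc}, v ∈ V1 i → D v ∈ G.dec)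
    (hD_W1dec : ∀ {j : ℤ} {w : Lc}, w ∈ W1 j → D w ∈ G.dec)
    -- the value of `D` on the suspension generators
    (hD_sus00 : ∀ {i j : ℤ} {v w : Lc}, v ∈ V0 i → w ∈ W0 j → D (sus v w) = G.br v w)
    (hD_sus10 : ∀ {i j : ℤ} {v w : Lc}, v ∈ V1 i → w ∈ W0 j →
      D (sus v w) = G.br v w - (-1 : ℚ) ^ ((i + 1) * j) • sg j w (D v))
    (hD_sus01 : ∀ {i j : ℤ} {v w : Lc}, v ∈ V0 i → w ∈ W1 j →
      D (sus v w) = G.br v w - (-1 : ℚ) ^ i • sg i v (D w))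
    -- `(L₁, D)` is a dgl
    (hDD : ∀ x : Lc, D (D x) = 0)
 :
    ∀ {a : ℤ} {A : Lc}, A ∈ G.lieSub (fun i => V0 i ⊔ V1 i) → A ∈ G.grade a →
    ∀ {b : ℤ} {B : Lc}, B ∈ G.lieSub (fun i => V0 i ⊔ V1 i) → B ∈ G.grade b →
    ∀ {T : Lc}, T ∈ G.lieSub W0 →
      D (sg a A (sg b B T)) - (-1 : ℚ) ^ (a + 1) • sg a A (D (sg b B T))
        - (-1 : ℚ) ^ (a * (b + 1)) •
            (sg b B (D (sg a A T)) - (-1 : ℚ) ^ (a + 1) • sg b B (sg a A (D T)))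
      = (-1 : ℚ) ^ (a + 1) • sg (a + b) (G.br A B) T := by
  
  intro a A hA hAg b B hB hBg T hT
  have hpV : ∀ i, (V0 i ⊔ V1 i) ≤ G.grade i := fun i => sup_le (hV0 i) (hV1 i)
  have hVle : G.lieSub (fun i => V0 i ⊔ V1 i)
      ≤ G.lieSub (fun i => V0 i ⊔ V1 i ⊔ W0 i ⊔ W1 i) :=
    GLA.lieSub_mono fun i => le_sup_left.trans le_sup_left
  have hV0le : G.lieSub V0 ≤ G.lieSub (fun i => V0 i ⊔ V1 i) :=
    GLA.lieSub_mono fun i => le_sup_left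
  have hA' : A ∈ G.lieSub (fun i => V0 i ⊔ V1 i ⊔ W0 i ⊔ W1 i) := hVle hA
  have hB' : B ∈ G.lieSub (fun i => V0 i ⊔ V1 i ⊔ W0 i ⊔ W1 i) := hVle hB
  have hwmem : ∀ {j : ℤ} {w : Lc}, w ∈ W0 j →
      w ∈ G.lieSub (fun i => V0 i ⊔ V1 i ⊔ W0 i ⊔ W1 i) :=
    fun {j w} hw => GLA.le_lieSub j (Submodule.mem_sup_left (Submodule.mem_sup_right hw))
  have hvmem : ∀ {i : ℤ} {v : Lc}, v ∈ V0 i ⊔ V1 i →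
      v ∈ G.lieSub (fun i => V0 i ⊔ V1 i ⊔ W0 i ⊔ W1 i) :=
    fun {i v} hv => GLA.le_lieSub i (Submodule.mem_sup_left (Submodule.mem_sup_left hv))
  -- (A) inner derivations by generators of V kill 𝕃(V)
  have auxA : ∀ (i : ℤ) (v : Lc), v ∈ V0 i ⊔ V1 i →
      ∀ X ∈ G.lieSub (fun i => V0 i ⊔ V1 i), sg i v X = 0 := by
    intro i v hv
    have h : G.lieSub (fun i => V0 i ⊔ V1 i) ≤ LinearMap.ker (sg i v) := by
      refine GLA.lieSub_homog_le hpV _ ?_ ?_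
      · intro i' v' hv'
        exact LinearMap.mem_ker.2 (hsg_vv hv hv')
      · intro n m x y hxg hyg hxl hyl hxk hyk
        rw [LinearMap.mem_ker] at hxk hyk ⊢
        rw [hsg_der (hvmem hv) (hpV i hv) x y hxg, hxk, hyk]
        simp
    exact fun X hX => LinearMap.mem_ker.1 (h hX)
  -- (B) σ_A kills 𝕃(V)
  have auxB : ∀ (c : ℤ) (C : Lc), C ∈ G.lieSub (fun i => V0 i ⊔ V1 i) → C ∈ G.grade c →
      ∀ X ∈ G.lieSub (fun i => V0 i ⊔ V1 i), sg c C X = 0 := by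
    intro c C hC hCg
    have h : G.lieSub (fun i => V0 i ⊔ V1 i) ≤ LinearMap.ker (sg c C) := by
      refine GLA.lieSub_homog_le hpV _ ?_ ?_
      · intro i' v' hv'
        rw [LinearMap.mem_ker, hsg_Av (hVle hC) hCg hv', auxA i' v' hv' C hC, smul_zero]
      · intro n m x y hxg hyg hxl hyl hxk hyk
        rw [LinearMap.mem_ker] at hxk hyk ⊢
        rw [hsg_der (hVle hC) hCg x y hxg, hxk, hyk]
        simp
    exact fun X hX => LinearMap.mem_ker.1 (h hX)
  -- (C) σ_A ∘ σ_w kills 𝕃(V)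
  have auxC : ∀ (c : ℤ) (C : Lc), C ∈ G.lieSub (fun i => V0 i ⊔ V1 i) → C ∈ G.grade c →
      ∀ (j : ℤ) (w : Lc), w ∈ W0 j →
      ∀ X ∈ G.lieSub (fun i => V0 i ⊔ V1 i), sg c C (sg j w X) = 0 := by
    intro c C hC hCg j w hw
    have h : G.lieSub (fun i => V0 i ⊔ V1 i) ≤ LinearMap.ker ((sg c C) ∘ₗ (sg j w)) := by
      refine GLA.lieSub_homog_le hpV _ ?_ ?_
      · intro i v hv
        obtain ⟨v0, hv0, v1, hv1, rfl⟩ := Submodule.mem_sup.1 hv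
        rw [LinearMap.mem_ker, LinearMap.comp_apply, map_add,
          hsg_wv (Submodule.mem_sup_left hv0) hw, hsg_wv (Submodule.mem_sup_right hv1) hw]
        simp [hsg_AS (hVle hC) hCg (hsus00 hv0 hw), hsg_AS (hVle hC) hCg (hsus10 hv1 hw)]
      · intro n m x y hxg hyg hxl hyl hxk hyk
        rw [LinearMap.mem_ker, LinearMap.comp_apply] at hxk hyk ⊢
        rw [hsg_der (hwmem hw) (hW0 j hw) x y hxg, map_add, map_smul,
          hsg_der (hVle hC) hCg _ y (hsg_grade (hwmem hw) (hW0 j hw) hxg),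
          hsg_der (hVle hC) hCg x _ hxg, hxk, hyk,
          auxB c C hC hCg x hxl, auxB c C hC hCg y hyl]
        simp
    exact fun X hX => LinearMap.mem_ker.1 (h hX)
  -- (F) D preserves 𝕃(V)
  have auxF : ∀ X ∈ G.lieSub (fun i => V0 i ⊔ V1 i),
      D X ∈ G.lieSub (fun i => V0 i ⊔ V1 i) := by
    have h : G.lieSub (fun i => V0 i ⊔ V1 i)
        ≤ Submodule.comap D (G.lieSub (fun i => V0 i ⊔ V1 i)) := by
      refine GLA.lieSub_homog_le hpV _ ?_ ?_
      · intro i v hv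
        obtain ⟨v0, hv0, v1, hv1, rfl⟩ := Submodule.mem_sup.1 hv
        rw [Submodule.mem_comap, map_add, hD_V0 hv0, zero_add]
        exact hV0le (hD_V1 hv1)
      · intro n m x y hxg hyg hxl hyl hxk hyk
        rw [Submodule.mem_comap] at hxk hyk ⊢
        rw [hD_der x y hxg]
        exact Submodule.add_mem _ (GLA.lieSub_br hxk hyl)
          (Submodule.smul_mem _ _ (GLA.lieSub_br hxl hyk))
    exact fun X hX => Submodule.mem_comap.1 (h hX)
  -- (D) the commutator [D, σ_w] on 𝕃(V)
  have auxD : ∀ (j : ℤ) (w : Lc), w ∈ W0 j → ∀ X ∈ G.lieSub (fun i => V0 i ⊔ V1 i),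
      D (sg j w X) = -(G.br w X) + (-1:ℚ)^(j+1) • sg j w (D X) := by
    intro j w hw
    have hw' := hwmem hw
    have hwg : w ∈ G.grade j := hW0 j hw
    have h : G.lieSub (fun i => V0 i ⊔ V1 i) ≤
        LinearMap.ker (D ∘ₗ sg j w + G.br w - ((-1:ℚ)^(j+1)) • (sg j w ∘ₗ D)) := by
      refine GLA.lieSub_homog_le hpV _ ?_ ?_
      · intro i v hv
        obtain ⟨v0, hv0, v1, hv1, rfl⟩ := Submodule.mem_sup.1 hv
        simp only [LinearMap.mem_ker, LinearMap.add_apply, LinearMap.sub_apply,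
          LinearMap.smul_apply, LinearMap.comp_apply]
        rw [map_add (sg j w), hsg_wv (Submodule.mem_sup_left hv0) hw,
          hsg_wv (Submodule.mem_sup_right hv1) hw, map_add D, map_smul D, map_smul D,
          hD_sus00 hv0 hw, hD_sus10 hv1 hw, map_add D, hD_V0 hv0, zero_add,
          G.antisymm (hV0 i hv0) hwg, G.antisymm (hV1 i hv1) hwg, map_add (G.br w)]
        simp only [map_add, map_smul, map_zero, smul_add, smul_smul, smul_zero,
          zero_add, add_zero, smul_neg, smul_sub, sub_zero, neg_zero,
          LinearMap.add_apply, LinearMap.smul_apply, LinearMap.neg_apply, LinearMap.sub_apply]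
        have f1 := nzp_sq (i*j)
        have f2 : (-1:ℚ)^(i*j) * (-1:ℚ)^((i+1)*j) = (-1:ℚ)^j := by
          rw [← nzp_add]; exact nzp_congr (i*j) (by ring)
        have f3 : (-1:ℚ)^(j+1) = -((-1:ℚ)^j) := by rw [nzp_add, zpow_one]; ring
        match_scalars
        case _ => linear_combination -f1
        case _ => linear_combination -f1
        case _ => linear_combination -f2 - f3
      · intro n m x y hxg hyg hxl hyl hxk hyk
        simp only [LinearMap.mem_ker, LinearMap.add_apply, LinearMap.sub_apply,
          LinearMap.smul_apply, LinearMap.comp_apply] at hxk hyk ⊢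
        have hx0 : D (sg j w x) = -(G.br w x) + (-1:ℚ)^(j+1) • sg j w (D x) := by
          linear_combination (norm := module) hxk
        have hy0 : D (sg j w y) = -(G.br w y) + (-1:ℚ)^(j+1) • sg j w (D y) := by
          linear_combination (norm := module) hyk
        rw [hsg_der hw' hwg x y hxg, map_add D, map_smul D,
          hD_der (sg j w x) y (hsg_grade hw' hwg hxg), hD_der x (sg j w y) hxg,
          hx0, hy0, hD_der x y hxg, map_add (sg j w), map_smul (sg j w),
          hsg_der hw' hwg (D x) y (hD_grade hxg), hsg_der hw' hwg x (D y) hxg,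
          G.jacobi y hwg hxg]
        simp only [map_add, map_neg, map_smul, smul_add, smul_neg, smul_smul, smul_sub,
          LinearMap.add_apply, LinearMap.smul_apply, LinearMap.neg_apply, LinearMap.sub_apply]
        have g1 : (-1:ℚ)^(-1*(n+j+1)) = (-1:ℚ)^(n+j+1) := nzp_congr (-(n+j+1)) (by ring)
        have g2 : (-1:ℚ)^(j+1) * (-1:ℚ)^(-1*n) = (-1:ℚ)^(n+j+1) := by
          rw [← nzp_add]; exact nzp_congr (-n) (by ring)
        have g3 : (-1:ℚ)^(j+1) * (-1:ℚ)^((j+1)*(n-1)) = (-1:ℚ)^((j+1)*n) := by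
          rw [← nzp_add]; exact nzp_congr 0 (by ring)
        have g4 : (-1:ℚ)^((j+1)*n) * (-1:ℚ)^(-1*n) = (-1:ℚ)^(j*n) := by
          rw [← nzp_add]; exact nzp_congr 0 (by ring)
        match_scalars <;>
          first
            | ring1
            | linear_combination g1 - g2
            | linear_combination -g3
            | linear_combination -g4
    intro X hX
    have h0 := LinearMap.mem_ker.1 (h hX)
    simp only [LinearMap.add_apply, LinearMap.sub_apply, LinearMap.smul_apply,
      LinearMap.comp_apply] at h0
    linear_combination (norm := module) h0
  -- the two commutator derivations via der_comm
  have hDg : ∀ {n : ℤ} {x : Lc}, x ∈ G.grade n → D x ∈ G.grade (n + (-1)) := by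
    intro n x hx
    rw [show n + (-1:ℤ) = n - 1 by ring]
    exact hD_grade hx
  have hAg1 : ∀ {n : ℤ} {x : Lc}, x ∈ G.grade n → sg a A x ∈ G.grade (n + (a+1)) := by
    intro n x hx
    rw [show n + (a+1) = n + a + 1 by ring]
    exact hsg_grade hA' hAg hx
  have hBg1 : ∀ {n : ℤ} {x : Lc}, x ∈ G.grade n → sg b B x ∈ G.grade (n + (b+1)) := by
    intro n x hx
    rw [show n + (b+1) = n + b + 1 by ring]
    exact hsg_grade hB' hBg hx
  obtain ⟨h1g, h1d⟩ := G.der_comm D (sg a A) (-1) (a+1) a (by ring) hDg hAg1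
    (fun x y hx => hD_der x y hx) (fun x y hx => hsg_der hA' hAg x y hx)
  obtain ⟨h2g, h2d⟩ := G.der_comm
    (D ∘ₗ sg a A - ((-1:ℚ)^((-1)*(a+1))) • (sg a A ∘ₗ D)) (sg b B)
    a (b+1) (a+b+1) (by ring) h1g hBg1 h1d (fun x y hx => hsg_der hB' hBg x y hx)
  -- the bracket [A,B]
  have hCm : G.br A B ∈ G.lieSub (fun i => V0 i ⊔ V1 i) := GLA.lieSub_br hA hB
  have hC' := hVle hCm
  have hCgr : G.br A B ∈ G.grade (a+b) := G.br_mem hAg hBg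
  -- the main induction
  set M2 : Lc →ₗ[ℚ] Lc :=
    (D ∘ₗ sg a A - ((-1:ℚ)^((-1)*(a+1))) • (sg a A ∘ₗ D)) ∘ₗ sg b B
      - ((-1:ℚ)^(a*(b+1))) •
        (sg b B ∘ₗ (D ∘ₗ sg a A - ((-1:ℚ)^((-1)*(a+1))) • (sg a A ∘ₗ D))) with hM2
  have key : G.lieSub W0 ≤
      LinearMap.ker (M2 - ((-1:ℚ)^(a+1)) • (sg (a+b) (G.br A B))) := by
    refine GLA.lieSub_homog_le hW0 _ ?_ ?_
    · -- base case: w ∈ W0 j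
      intro j w hw
      have hw' := hwmem hw
      have hwg : w ∈ G.grade j := hW0 j hw
      have hwW : w ∈ W0 j ⊔ W1 j := Submodule.mem_sup_left hw
      have eDw : D w = 0 := hD_W0 hw
      have eBw : sg b B w = (-1:ℚ)^(j*b) • sg j w B := hsg_Aw hB' hBg hwW
      have eAw : sg a A w = (-1:ℚ)^(j*a) • sg j w A := hsg_Aw hA' hAg hwW
      have eABw : sg a A (sg b B w) = 0 := by
        rw [eBw, map_smul, auxC a A hA hAg j w hw B hB, smul_zero]
      have eADBw : sg a A (D (sg b B w))
          = -(((-1:ℚ)^(j*b) * (-1:ℚ)^(j*a)) • G.br (sg j w A) B) := by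
        rw [eBw, map_smul D, auxD j w hw B hB]
        simp only [map_smul, map_add, map_neg, hsg_der hA' hAg w B hwg,
          auxB a A hA hAg B hB, auxC a A hA hAg j w hw (D B) (auxF B hB), eAw,
          LinearMap.map_smul, LinearMap.smul_apply, map_zero, smul_zero, add_zero,
          zero_add, smul_neg, neg_zero, smul_smul]
      have eBDAw : sg b B (D (sg a A w))
          = -(((-1:ℚ)^(j*a) * (-1:ℚ)^(j*b)) • G.br (sg j w B) A) := by
        rw [eAw, map_smul D, auxD j w hw A hA]
        simp only [map_smul, map_add, map_neg, hsg_der hB' hBg w A hwg,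
          auxB b B hB hBg A hA, auxC b B hB hBg j w hw (D A) (auxF A hA), eBw,
          LinearMap.map_smul, LinearMap.smul_apply, map_zero, smul_zero, add_zero,
          zero_add, smul_neg, neg_zero, smul_smul]
      have eCw : sg (a+b) (G.br A B) w
          = (-1:ℚ)^(j*(a+b)) • (G.br (sg j w A) B
              - ((-1:ℚ)^((j+1)*a) * (-1:ℚ)^(a*(b+j+1))) • G.br (sg j w B) A) := by
        rw [hsg_Aw hC' hCgr hwW, hsg_der hw' hwg A B hAg,
          G.antisymm hAg (hsg_grade hw' hwg hBg)]
        simp only [smul_neg, smul_smul]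
        module
      rw [LinearMap.mem_ker]
      simp only [hM2, LinearMap.sub_apply, LinearMap.smul_apply, LinearMap.comp_apply]
      rw [eDw, map_zero (sg a A), smul_zero, sub_zero, eABw, map_zero D, eADBw, eBDAw, eCw]
      simp only [smul_neg, smul_smul, smul_sub, zero_sub, neg_neg,
        LinearMap.add_apply, LinearMap.smul_apply, LinearMap.neg_apply, LinearMap.sub_apply]
      have m1a : (-1:ℚ)^(-1*(a+1)) * ((-1:ℚ)^(j*b) * (-1:ℚ)^(j*a))
          = (-1:ℚ)^(a+1+j*a+j*b) := by
        rw [← nzp_add, ← nzp_add]; exact nzp_congr (-(a+1)) (by ring)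
      have m1b : (-1:ℚ)^(a+1) * (-1:ℚ)^(j*(a+b)) = (-1:ℚ)^(a+1+j*a+j*b) := by
        rw [← nzp_add]; exact nzp_congr 0 (by ring)
      have m2a : (-1:ℚ)^(a*(b+1)) * ((-1:ℚ)^(j*a) * (-1:ℚ)^(j*b))
          = (-1:ℚ)^(a*b+a+j*a+j*b) := by
        rw [← nzp_add, ← nzp_add]; exact nzp_congr 0 (by ring)
      have m2b : (-1:ℚ)^(a+1) * ((-1:ℚ)^(j*(a+b)) * ((-1:ℚ)^((j+1)*a) * (-1:ℚ)^(a*(b+j+1))))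
          = -((-1:ℚ)^(a*b+a+j*a+j*b)) := by
        rw [← nzp_add, ← nzp_add, ← nzp_add,
          nzp_congr (a+j*a)
            (show a+1+(j*(a+b)+((j+1)*a+a*(b+j+1))) = (a*b+a+j*a+j*b+1) + 2*(a+j*a) by ring),
          nzp_add, zpow_one]
        ring
      match_scalars <;>
        first
          | ring1
          | linear_combination m1a - m1b
          | linear_combination m2a + m2b
    · -- inductive step
      intro n m x y hxg hyg hxl hyl hxk hyk
      rw [LinearMap.mem_ker, LinearMap.sub_apply, LinearMap.smul_apply] at hxk hyk ⊢
      have hx0 : M2 x = (-1:ℚ)^(a+1) • sg (a+b) (G.br A B) x := sub_eq_zero.1 hxk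
      have hy0 : M2 y = (-1:ℚ)^(a+1) • sg (a+b) (G.br A B) y := sub_eq_zero.1 hyk
      rw [hM2] at hx0 hy0 ⊢
      rw [h2d x y hxg, hsg_der hC' hCgr x y hxg, hx0, hy0]
      simp only [map_smul, LinearMap.smul_apply, smul_add, smul_smul]
      match_scalars <;> ring1
  -- conclusion
  have h0 := LinearMap.mem_ker.1 (key hT)
  rw [LinearMap.sub_apply, LinearMap.smul_apply, hM2] at h0
  have hc1 : (-1:ℚ)^((-1)*(a+1)) = (-1:ℚ)^(a+1) := nzp_congr (-(a+1)) (by ring)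
  rw [hc1] at h0
  simp only [LinearMap.sub_apply, LinearMap.smul_apply, LinearMap.comp_apply,
    map_sub, map_smul] at h0
  linear_combination (norm := module) h0
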